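/- Let M = [m_{ij}] be an n×n real Nekrasov matrix with m_{ii} > 0 for all i, let q ∈ ℝⁿ, and let x* be a solution of LCP(M,q). Then for every x ∈ ℝⁿ, ‖x − x*‖_∞ ≤ (max_{1 ≤ i ≤ n} η_i(M)/min{m_{ii} − h_i(M), 1}) · ‖r(x)‖_∞. -/

import Mathlib

open Finset

noncomputable def nekH {n : ℕ} {𝕜 : Type*} [RCLike 𝕜] (A : Matrix (Fin n) (Fin n) 𝕜) : Fin n → ℝ
  | i =>
    (∑ j : Fin n, if h : j < i then ‖A i j‖ / ‖A j j‖ * nekH A j else 0)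
      + ∑ j : Fin n, if i < j then ‖A i j‖ else 0
termination_by i => i.val
decreasing_by exact h

def IsNekrasov {n : ℕ} {𝕜 : Type*} [RCLike 𝕜] (A : Matrix (Fin n) (Fin n) 𝕜) : Prop :=
  ∀ i, nekH A i < ‖A i i‖

noncomputable def nekZ {n : ℕ} {𝕜 : Type*} [RCLike 𝕜] (A : Matrix (Fin n) (Fin n) 𝕜) : Fin n → ℝ
  | i => (∑ j : Fin n, if h : j < i then ‖A i j‖ / ‖A j j‖ * nekZ A j else 0) + 1
termination_by i => i.val
decreasing_by exact h

noncomputable def nekEta {n : ℕ} {𝕜 : Type*} [RCLike 𝕜] (M : Matrix (Fin n) (Fin n) 𝕜) : Fin n → ℝ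
  | i => (∑ j : Fin n, if h : j < i then ‖M i j‖ / min ‖M j j‖ 1 * nekEta M j else 0) + 1
termination_by i => i.val
decreasing_by exact h

noncomputable def linftyNorm {n : ℕ} {𝕜 : Type*} [RCLike 𝕜] (A : Matrix (Fin n) (Fin n) 𝕜) : ℝ :=
  ⨆ i, ∑ j, ‖A i j‖

noncomputable def rPlus {n : ℕ} (M : Matrix (Fin n) (Fin n) ℝ) (i : Fin n) : ℝ :=
  Finset.fold max 0 (fun j => M i j) (Finset.univ.erase i)

noncomputable def BPlus {n : ℕ} (M : Matrix (Fin n) (Fin n) ℝ) : Matrix (Fin n) (Fin n) ℝ :=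
  Matrix.of fun i j => M i j - rPlus M i

def IsBNekrasov {n : ℕ} (M : Matrix (Fin n) (Fin n) ℝ) : Prop :=
  IsNekrasov (BPlus M) ∧ ∀ i, 0 < BPlus M i i

def IsLCPSolution {n : ℕ} (M : Matrix (Fin n) (Fin n) ℝ) (q x : Fin n → ℝ) : Prop :=
  (∀ i, 0 ≤ x i) ∧ (∀ i, 0 ≤ (M.mulVec x + q) i) ∧ ∑ i, (M.mulVec x + q) i * x i = 0

def IsPMatrix {n : ℕ} (M : Matrix (Fin n) (Fin n) ℝ) : Prop :=
  ∀ S : Finset (Fin n), 0 < (M.submatrix (fun i : S => (i : Fin n)) (fun j : S => (j : Fin n))).det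


-- AUX START
lemma finStrong {n : ℕ} {C : Fin n → Prop} (h : ∀ i : Fin n, (∀ j, j < i → C j) → C i) : ∀ i, C i := by
  have key : ∀ k : ℕ, ∀ i : Fin n, i.val = k → C i := by
    intro k
    induction k using Nat.strong_induction_on with
    | _ k ih =>
      intro i hik
      exact h i (fun j hj => ih j.val (hik ▸ hj) j rfl)
  exact fun i => key i.val i rfl

lemma nekH_def {n : ℕ} (A : Matrix (Fin n) (Fin n) ℝ) (i : Fin n) :
    nekH A i = (∑ j : Fin n, if j < i then |A i j| / |A j j| * nekH A j else 0)
      + ∑ j : Fin n, if i < j then |A i j| else 0 := by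
  rw [nekH]; simp [Real.norm_eq_abs]

lemma nekZ_def {n : ℕ} (A : Matrix (Fin n) (Fin n) ℝ) (i : Fin n) :
    nekZ A i = (∑ j : Fin n, if j < i then |A i j| / |A j j| * nekZ A j else 0) + 1 := by
  rw [nekZ]; simp [Real.norm_eq_abs]

lemma nekEta_def {n : ℕ} (M : Matrix (Fin n) (Fin n) ℝ) (i : Fin n) :
    nekEta M i = (∑ j : Fin n, if j < i then |M i j| / min (|M j j|) 1 * nekEta M j else 0) + 1 := by
  rw [nekEta]; simp [Real.norm_eq_abs]

lemma nekH_nonneg {n : ℕ} (A : Matrix (Fin n) (Fin n) ℝ) : ∀ i, 0 ≤ nekH A i := by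
  refine finStrong fun i ih => ?_
  rw [nekH_def]
  refine add_nonneg (Finset.sum_nonneg fun j _ => ?_) (Finset.sum_nonneg fun j _ => ?_) <;> split
  case isTrue h => exact mul_nonneg (by positivity) (ih j h)
  case isFalse => rfl
  case isTrue => positivity
  case isFalse => rfl

lemma nekZ_nonneg {n : ℕ} (A : Matrix (Fin n) (Fin n) ℝ) : ∀ i, 0 ≤ nekZ A i := by
  refine finStrong fun i ih => ?_
  rw [nekZ_def]
  have : 0 ≤ ∑ j : Fin n, if j < i then |A i j| / |A j j| * nekZ A j else 0 := by
    refine Finset.sum_nonneg fun j _ => ?_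
    split
    case isTrue h => exact mul_nonneg (by positivity) (ih j h)
    case isFalse => rfl
  linarith

lemma nekEta_nonneg {n : ℕ} (M : Matrix (Fin n) (Fin n) ℝ) : ∀ i, 0 ≤ nekEta M i := by
  refine finStrong fun i ih => ?_
  rw [nekEta_def]
  have : 0 ≤ ∑ j : Fin n, if j < i then |M i j| / min (|M j j|) 1 * nekEta M j else 0 := by
    refine Finset.sum_nonneg fun j _ => ?_
    split
    case isTrue h => exact mul_nonneg (by positivity) (ih j h)
    case isFalse => rfl
  linarith

noncomputable def Amat {n : ℕ} (M : Matrix (Fin n) (Fin n) ℝ) (d : Fin n → ℝ) :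
    Matrix (Fin n) (Fin n) ℝ :=
  Matrix.of fun i j => (if i = j then 1 - d i else 0) + d i * M i j

lemma Amat_diag {n : ℕ} (M : Matrix (Fin n) (Fin n) ℝ) (d : Fin n → ℝ) (i : Fin n) :
    Amat M d i i = 1 - d i + d i * M i i := by simp [Amat]

lemma Amat_off {n : ℕ} (M : Matrix (Fin n) (Fin n) ℝ) (d : Fin n → ℝ) {i j : Fin n}
    (h : i ≠ j) : Amat M d i j = d i * M i j := by simp [Amat, h]

lemma Amat_diag_pos {n : ℕ} (M : Matrix (Fin n) (Fin n) ℝ) (d : Fin n → ℝ)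
    (hd0 : ∀ i, 0 ≤ d i) (hd1 : ∀ i, d i ≤ 1) (hM : ∀ i, 0 < M i i) (i : Fin n) :
    min (M i i) 1 ≤ Amat M d i i := by
  rw [Amat_diag]
  have h1 := min_le_left (M i i) 1
  have h2 := min_le_right (M i i) 1
  nlinarith [hd0 i, hd1 i]

lemma Amat_pos {n : ℕ} (M : Matrix (Fin n) (Fin n) ℝ) (d : Fin n → ℝ)
    (hd0 : ∀ i, 0 ≤ d i) (hd1 : ∀ i, d i ≤ 1) (hM : ∀ i, 0 < M i i) (i : Fin n) :
    0 < Amat M d i i :=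
  lt_of_lt_of_le (lt_min (hM i) one_pos) (Amat_diag_pos M d hd0 hd1 hM i)

lemma claimA {n : ℕ} (M : Matrix (Fin n) (Fin n) ℝ) (d : Fin n → ℝ)
    (hd0 : ∀ i, 0 ≤ d i) (hd1 : ∀ i, d i ≤ 1) (hM : ∀ i, 0 < M i i) :
    ∀ i, nekH (Amat M d) i ≤ d i * nekH M i := by
  refine finStrong fun i ih => ?_
  rw [nekH_def, nekH_def, mul_add, Finset.mul_sum, Finset.mul_sum]
  refine add_le_add (Finset.sum_le_sum fun j _ => ?_) (Finset.sum_le_sum fun j _ => ?_)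
  · split
    case isFalse => simp
    case isTrue hji =>
      have hne : i ≠ j := (Fin.ne_of_lt hji).symm
      have hAjj : 0 < Amat M d j j := Amat_pos M d hd0 hd1 hM j
      rw [Amat_off M d hne, abs_of_pos hAjj, abs_mul, abs_of_nonneg (hd0 i)]
      have hdiv : nekH (Amat M d) j / Amat M d j j ≤ nekH M j / M j j := by
        rw [div_le_div_iff₀ hAjj (hM j)]
        have h1 := ih j hji
        have h2 := nekH_nonneg M j
        have h3 := nekH_nonneg (Amat M d) j
        rw [Amat_diag]
        nlinarith [hd0 j, hd1 j, hM j]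
      calc d i * |M i j| / Amat M d j j * nekH (Amat M d) j
          = (d i * |M i j|) * (nekH (Amat M d) j / Amat M d j j) := by ring
        _ ≤ (d i * |M i j|) * (nekH M j / M j j) := by
            exact mul_le_mul_of_nonneg_left hdiv (mul_nonneg (hd0 i) (abs_nonneg _))
        _ = d i * (|M i j| / |M j j| * nekH M j) := by
            rw [abs_of_pos (hM j)]; ring
  · split
    case isFalse => simp
    case isTrue hij =>
      have hne : i ≠ j := Fin.ne_of_lt hij
      rw [Amat_off M d hne, abs_mul, abs_of_nonneg (hd0 i)]

lemma claimB {n : ℕ} (M : Matrix (Fin n) (Fin n) ℝ) (d : Fin n → ℝ)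
    (hd0 : ∀ i, 0 ≤ d i) (hd1 : ∀ i, d i ≤ 1) (hM : ∀ i, 0 < M i i) :
    ∀ i, nekZ (Amat M d) i ≤ nekEta M i := by
  refine finStrong fun i ih => ?_
  rw [nekZ_def, nekEta_def]
  refine add_le_add_left (Finset.sum_le_sum fun j _ => ?_) 1
  split
  case isFalse => rfl
  case isTrue hji =>
    have hne : i ≠ j := (Fin.ne_of_lt hji).symm
    have hAjj : 0 < Amat M d j j := Amat_pos M d hd0 hd1 hM j
    have hmin : (0:ℝ) < min (|M j j|) 1 := lt_min (abs_pos.mpr (hM j).ne') one_pos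
    have hminle : min (|M j j|) 1 ≤ Amat M d j j := by
      rw [abs_of_pos (hM j)]; exact Amat_diag_pos M d hd0 hd1 hM j
    rw [Amat_off M d hne, abs_mul, abs_of_nonneg (hd0 i), abs_of_pos hAjj]
    have hdiv : nekZ (Amat M d) j / Amat M d j j ≤ nekEta M j / min (|M j j|) 1 :=
      div_le_div₀ (nekEta_nonneg M j) (ih j hji) hmin hminle
    calc d i * |M i j| / Amat M d j j * nekZ (Amat M d) j
        = (d i * |M i j|) * (nekZ (Amat M d) j / Amat M d j j) := by ring
      _ ≤ (1 * |M i j|) * (nekEta M j / min (|M j j|) 1) := by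
          refine mul_le_mul (by nlinarith [abs_nonneg (M i j), hd1 i, hd0 i]) hdiv ?_ (by positivity)
          exact div_nonneg (nekZ_nonneg _ j) hAjj.le
      _ = |M i j| / min (|M j j|) 1 * nekEta M j := by ring

lemma claimC {n : ℕ} (M : Matrix (Fin n) (Fin n) ℝ) (d : Fin n → ℝ)
    (hd0 : ∀ i, 0 ≤ d i) (hd1 : ∀ i, d i ≤ 1) (hM : ∀ i, 0 < M i i) (i : Fin n) :
    min (M i i - nekH M i) 1 ≤ Amat M d i i - nekH (Amat M d) i := by
  have hA := claimA M d hd0 hd1 hM i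
  rw [Amat_diag]
  have h1 := min_le_left (M i i - nekH M i) 1
  have h2 := min_le_right (M i i - nekH M i) 1
  nlinarith [hd0 i, hd1 i]

lemma core {n : ℕ} (A : Matrix (Fin n) (Fin n) ℝ) (hA : ∀ j, 0 < A j j)
    (u b : Fin n → ℝ) (hb : ∀ i, b i = ∑ j, A i j * u j)
    (N β : ℝ) (hu : ∀ j, |u j| ≤ N) (hβ : ∀ j, |b j| ≤ β) :
    ∀ i, A i i * |u i| ≤ nekH A i * N + nekZ A i * β := by
  refine finStrong fun i ih => ?_
  have hsplit : ∀ j : Fin n,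
      (if j = i then A i j * u j else 0) + ((if j < i then A i j * u j else 0)
        + (if i < j then A i j * u j else 0)) = A i j * u j := by
    intro j
    rcases lt_trichotomy j i with h | h | h
    · simp [h, Fin.ne_of_lt h, lt_asymm h]
    · simp [h, lt_irrefl]
    · simp [Fin.ne_of_gt h, lt_asymm h, h]
  have hsum : A i i * u i = b i - (∑ j, if j < i then A i j * u j else 0)
      - (∑ j, if i < j then A i j * u j else 0) := by
    have : ∑ j, A i j * u j = A i i * u i + ((∑ j, if j < i then A i j * u j else 0)
        + (∑ j, if i < j then A i j * u j else 0)) := by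
      calc ∑ j, A i j * u j
          = ∑ j, ((if j = i then A i j * u j else 0) + ((if j < i then A i j * u j else 0)
              + (if i < j then A i j * u j else 0))) :=
            (Finset.sum_congr rfl fun j _ => (hsplit j).symm)
        _ = (∑ j, if j = i then A i j * u j else 0) + ((∑ j, if j < i then A i j * u j else 0)
              + (∑ j, if i < j then A i j * u j else 0)) := by
            rw [Finset.sum_add_distrib, Finset.sum_add_distrib]
        _ = A i i * u i + ((∑ j, if j < i then A i j * u j else 0)
              + (∑ j, if i < j then A i j * u j else 0)) := by
            rw [Finset.sum_ite_eq' univ i (fun j => A i j * u j)]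
            simp
    rw [hb i, this]; ring
  have hN : 0 ≤ N := le_trans (abs_nonneg _) (hu i)
  have hβ0 : 0 ≤ β := le_trans (abs_nonneg _) (hβ i)
  have habs : A i i * |u i| ≤ |b i| + |∑ j, if j < i then A i j * u j else 0|
      + |∑ j, if i < j then A i j * u j else 0| := by
    rw [← abs_of_pos (hA i), ← abs_mul]
    rw [hsum]
    calc |b i - (∑ j, if j < i then A i j * u j else 0)
        - (∑ j, if i < j then A i j * u j else 0)|
        ≤ |b i - (∑ j, if j < i then A i j * u j else 0)|
          + |∑ j, if i < j then A i j * u j else 0| := abs_sub _ _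
      _ ≤ |b i| + |∑ j, if j < i then A i j * u j else 0|
          + |∑ j, if i < j then A i j * u j else 0| := by
          have := abs_sub (b i) (∑ j, if j < i then A i j * u j else 0)
          linarith
  have hS1 : |∑ j, if j < i then A i j * u j else 0|
      ≤ (∑ j, if j < i then |A i j| / |A j j| * nekH A j else 0) * N
        + (∑ j, if j < i then |A i j| / |A j j| * nekZ A j else 0) * β := by
    calc |∑ j, if j < i then A i j * u j else 0|
        ≤ ∑ j, |if j < i then A i j * u j else 0| := Finset.abs_sum_le_sum_abs _ _
      _ ≤ ∑ j, ((if j < i then |A i j| / |A j j| * nekH A j else 0) * N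
            + (if j < i then |A i j| / |A j j| * nekZ A j else 0) * β) := by
          refine Finset.sum_le_sum fun j _ => ?_
          split
          case isFalse => simp
          case isTrue hji =>
            have hAjj := hA j
            have huj : |u j| ≤ (nekH A j * N + nekZ A j * β) / A j j := by
              rw [le_div_iff₀ hAjj, mul_comm]
              exact ih j hji
            calc |A i j * u j| = |A i j| * |u j| := abs_mul _ _
              _ ≤ |A i j| * ((nekH A j * N + nekZ A j * β) / A j j) :=
                  mul_le_mul_of_nonneg_left huj (abs_nonneg _)
              _ = |A i j| / |A j j| * nekH A j * N + |A i j| / |A j j| * nekZ A j * β := by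
                  rw [abs_of_pos hAjj]; field_simp
      _ = (∑ j, if j < i then |A i j| / |A j j| * nekH A j else 0) * N
            + (∑ j, if j < i then |A i j| / |A j j| * nekZ A j else 0) * β := by
          rw [Finset.sum_add_distrib, Finset.sum_mul, Finset.sum_mul]
  have hS2 : |∑ j, if i < j then A i j * u j else 0|
      ≤ (∑ j, if i < j then |A i j| else 0) * N := by
    calc |∑ j, if i < j then A i j * u j else 0|
        ≤ ∑ j, |if i < j then A i j * u j else 0| := Finset.abs_sum_le_sum_abs _ _
      _ ≤ ∑ j, (if i < j then |A i j| else 0) * N := by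
          refine Finset.sum_le_sum fun j _ => ?_
          split
          case isFalse => simp
          case isTrue hij =>
            rw [abs_mul]
            exact mul_le_mul_of_nonneg_left (hu j) (abs_nonneg _)
      _ = (∑ j, if i < j then |A i j| else 0) * N := by rw [Finset.sum_mul]
  rw [nekH_def, nekZ_def]
  have := hβ i
  nlinarith [habs, hS1, hS2]

lemma minSubMin (a b c e : ℝ) :
    ∃ t : ℝ, 0 ≤ t ∧ t ≤ 1 ∧ min a b - min c e = (1 - t) * (a - c) + t * (b - e) := by
  have hhigh : min a b - min c e ≤ max (a - c) (b - e) := by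
    rcases le_total c e with h | h
    · rw [min_eq_left h]
      linarith [min_le_left a b, le_max_left (a - c) (b - e)]
    · rw [min_eq_right h]
      linarith [min_le_right a b, le_max_right (a - c) (b - e)]
  have hlow : min (a - c) (b - e) ≤ min a b - min c e := by
    rcases le_total a b with h | h
    · rw [min_eq_left h]
      linarith [min_le_left c e, min_le_left (a - c) (b - e)]
    · rw [min_eq_right h]
      linarith [min_le_right c e, min_le_right (a - c) (b - e)]
  rcases le_total (a - c) (b - e) with h | h
  · rw [min_eq_left h] at hlow
    rw [max_eq_right h] at hhigh
    rcases eq_or_lt_of_le h with heq | hlt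
    · exact ⟨0, le_rfl, zero_le_one, by linarith⟩
    · refine ⟨(min a b - min c e - (a - c)) / (b - e - (a - c)), ?_, ?_, ?_⟩
      · apply div_nonneg <;> linarith
      · rw [div_le_one (by linarith)]
        linarith
      · have hne : b - e - (a - c) ≠ 0 := ne_of_gt (by linarith)
        field_simp
        ring
  · rw [min_eq_right h] at hlow
    rw [max_eq_left h] at hhigh
    rcases eq_or_lt_of_le h with heq | hlt
    · exact ⟨0, le_rfl, zero_le_one, by linarith⟩
    · refine ⟨(a - c - (min a b - min c e)) / (a - c - (b - e)), ?_, ?_, ?_⟩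
      · apply div_nonneg <;> linarith
      · rw [div_le_one (by linarith)]
        linarith
      · have hne : a - c - (b - e) ≠ 0 := ne_of_gt (by linarith)
        field_simp
        ring


theorem stmt17 {n : ℕ} (hn : 0 < n) (M : Matrix (Fin n) (Fin n) ℝ)
    (hdiag : ∀ i, 0 < M i i) (hNek : IsNekrasov M)
    (q xstar : Fin n → ℝ) (hsol : IsLCPSolution M q xstar) (x : Fin n → ℝ) :
    ‖x - xstar‖ ≤
      (Finset.univ.sup' ⟨⟨0, hn⟩, Finset.mem_univ _⟩
        (fun i => nekEta M i / min (M i i - nekH M i) 1)) *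
      ‖fun i => min (x i) ((M.mulVec x + q) i)‖ := by
  obtain ⟨hx0, hw0, hcomp⟩ := hsol
  have hzero : ∀ i, min (xstar i) ((M.mulVec xstar + q) i) = 0 := by
    intro i
    have hall := (Finset.sum_eq_zero_iff_of_nonneg
      (fun i _ => mul_nonneg (hw0 i) (hx0 i))).mp hcomp i (mem_univ i)
    rcases mul_eq_zero.mp hall with h | h
    · rw [h]; exact min_eq_right (hx0 i)
    · rw [h]; exact min_eq_left (hw0 i)
  have hmins := fun i => minSubMin (x i) ((M.mulVec x + q) i) (xstar i) ((M.mulVec xstar + q) i)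
  choose d hd0 hd1 hde using hmins
  set u : Fin n → ℝ := fun j => x j - xstar j with hu_def
  set b : Fin n → ℝ := fun i => min (x i) ((M.mulVec x + q) i) with hb_def
  have hb : ∀ i, b i = ∑ j, Amat M d i j * u j := by
    intro i
    have h1 : (M.mulVec x + q) i - (M.mulVec xstar + q) i = ∑ j, M i j * u j := by
      simp [Matrix.mulVec, dotProduct, ← Finset.sum_sub_distrib, mul_sub, hu_def]
    have h2 := hde i
    rw [hzero i, sub_zero] at h2
    have h3 : ∑ j, Amat M d i j * u j = (1 - d i) * u i + d i * ∑ j, M i j * u j := by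
      simp only [Amat, Matrix.of_apply, add_mul, Finset.sum_add_distrib, ite_mul, zero_mul,
        Finset.sum_ite_eq, Finset.mem_univ, if_true, Finset.mul_sum, mul_assoc]
    rw [h3, ← h1]
    simpa [hu_def, hb_def] using h2
  have hApos : ∀ j, 0 < Amat M d j j := Amat_pos M d hd0 hd1 hdiag
  have hneU : (univ : Finset (Fin n)).Nonempty := ⟨⟨0, hn⟩, mem_univ _⟩
  obtain ⟨i₀, -, hmax⟩ := Finset.exists_mem_eq_sup' hneU (fun j => |u j|)
  have huj : ∀ j, |u j| ≤ |u i₀| := fun j =>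
    hmax ▸ Finset.le_sup' (fun j => |u j|) (mem_univ j)
  have hβ : ∀ j, |b j| ≤ ‖b‖ := fun j => by
    simpa [Real.norm_eq_abs] using norm_le_pi_norm b j
  have hcore := core (Amat M d) hApos u b hb (|u i₀|) ‖b‖ huj hβ i₀
  have hC := claimC M d hd0 hd1 hdiag i₀
  have hB := claimB M d hd0 hd1 hdiag i₀
  have hNekpos : 0 < min (M i₀ i₀ - nekH M i₀) 1 := by
    have := hNek i₀
    rw [Real.norm_eq_abs, abs_of_pos (hdiag i₀)] at this
    exact lt_min (by linarith) one_pos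
  have hbnorm : 0 ≤ ‖b‖ := norm_nonneg b
  have hstep : min (M i₀ i₀ - nekH M i₀) 1 * |u i₀| ≤ nekEta M i₀ * ‖b‖ := by
    have t1 := mul_le_mul_of_nonneg_right hC (abs_nonneg (u i₀))
    have t2 := mul_le_mul_of_nonneg_right hB hbnorm
    nlinarith [hcore, t1, t2]
  have hfin : |u i₀| ≤ (nekEta M i₀ / min (M i₀ i₀ - nekH M i₀) 1) * ‖b‖ := by
    rw [div_mul_eq_mul_div, le_div_iff₀ hNekpos]
    linarith [hstep]
  have hsup : nekEta M i₀ / min (M i₀ i₀ - nekH M i₀) 1 ≤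
      Finset.univ.sup' ⟨⟨0, hn⟩, Finset.mem_univ _⟩
        (fun i => nekEta M i / min (M i i - nekH M i) 1) :=
    Finset.le_sup' (fun i => nekEta M i / min (M i i - nekH M i) 1) (mem_univ i₀)
  have hmain : |u i₀| ≤ (Finset.univ.sup' ⟨⟨0, hn⟩, Finset.mem_univ _⟩
      (fun i => nekEta M i / min (M i i - nekH M i) 1)) * ‖b‖ :=
    le_trans hfin (mul_le_mul_of_nonneg_right hsup hbnorm)
  have hnorm : ‖x - xstar‖ ≤ |u i₀| := by
    rw [pi_norm_le_iff_of_nonneg (abs_nonneg _)]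
    intro j
    simpa [Real.norm_eq_abs, hu_def] using huj j
  exact le_trans hnorm hmain
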